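/- arXiv:1610.04147 — 3 statements merged into one kernel-verified Lean document; each statement's English description precedes it below -/
import Mathlib

section
/- Let μ : [-r₀, t*] → ℝ be C¹ with μ(-r₀) close to 1, satisfying the expansion μ(s) = 1 - (1/s + 1/r₀) r₀² μ'(-r₀) + E(s) where |E(s)| ≤ ε ≤ 1/100, for all s ∈ [-r₀, t*] with t* ≤ -1. If at some time t we have μ(t) < 1/10, then necessarily r₀² μ'(-r₀) < 0 and moreover (1/t + 1/r₀) r₀² μ'(-r₀) ≥ 1/2; consequently r₀² μ'(-r₀) ≤ (1/2) · t r₀/(r₀ + t) < 0. -/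
/-- **The shock region forces a negative initial transversal derivative of `μ`.**
Suppose `μ(s) = 1 - (1/s + 1/r₀) m + E(s)` on `[-r₀, t*]` with `|E| ≤ ε ≤ 1/100`
and `t* ≤ -1`, where `m = r₀² μ'(-r₀)`.  If `μ(t) < 1/10` at some `t`, then
`m < 0`, `(1/t + 1/r₀) m ≥ 1/2`, and consequently
`m ≤ (1/2) t r₀/(r₀ + t) < 0`. -/
theorem shock_region_initial_Lb_mu
    (r₀ tstar ε m : ℝ) (μ E : ℝ → ℝ)
    (hr : 0 < r₀) (hts : tstar ≤ -1) (hrt : -r₀ ≤ tstar)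
    (hε0 : 0 ≤ ε) (hε : ε ≤ 1/100)
    (hexp : ∀ s ∈ Set.Icc (-r₀) tstar, μ s = 1 - (1/s + 1/r₀) * m + E s)
    (hE : ∀ s ∈ Set.Icc (-r₀) tstar, |E s| ≤ ε) :
    ∀ t ∈ Set.Icc (-r₀) tstar, μ t < 1/10 →
      m < 0 ∧ 1/2 ≤ (1/t + 1/r₀) * m ∧
      m ≤ 1/2 * (t * r₀ / (r₀ + t)) ∧ t * r₀ / (r₀ + t) < 0 := by
  intro t ht hμt
  obtain ⟨ht1, ht2⟩ := ht
  have htneg : t < 0 := lt_of_le_of_lt (ht2.trans hts) (by norm_num)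
  have htne : t ≠ 0 := htneg.ne
  have hEt := hE t ⟨ht1, ht2⟩
  have hEt' : -ε ≤ E t := (abs_le.mp hEt).1
  have hμeq := hexp t ⟨ht1, ht2⟩
  -- main lower bound
  have hc : 1/2 ≤ (1/t + 1/r₀) * m := by
    rw [hμeq] at hμt
    linarith
  -- the coefficient as a fraction
  have hfrac : 1/t + 1/r₀ = (r₀ + t) / (t * r₀) := by
    field_simp
  have htr : t * r₀ < 0 := mul_neg_of_neg_of_pos htneg hr
  have hrt0 : 0 ≤ r₀ + t := by linarith
  -- coefficient is ≤ 0
  have hcle : 1/t + 1/r₀ ≤ 0 := by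
    rw [hfrac]
    exact div_nonpos_of_nonneg_of_nonpos hrt0 htr.le
  have hm : m < 0 := by nlinarith
  have hclt : 1/t + 1/r₀ < 0 := by
    rcases lt_or_eq_of_le hcle with h | h
    · exact h
    · exfalso; rw [h] at hc; linarith
  have hrtpos : 0 < r₀ + t := by
    by_contra h
    push_neg at h
    have : r₀ + t = 0 := le_antisymm h hrt0
    rw [hfrac, this] at hclt
    simp at hclt
  refine ⟨hm, hc, ?_, ?_⟩
  · rw [hfrac] at hc
    rw [div_mul_eq_mul_div, le_div_iff_of_neg htr] at hc
    rw [mul_div_assoc', le_div_iff₀ hrtpos]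
    nlinarith
  · exact div_neg_of_neg_of_pos htr hrtpos
end

section
/- Suppose μ : [t₀, t*] → (0, ∞) satisfies, for all t₀ ≤ t < s < t*, the two-sided bounds μ(s) + (η - 1/(2a))(1/t - 1/s) ≤ μ(t) ≤ μ(s) + (η + 1/(2a))(1/t - 1/s), where η ≥ 1, a ≥ 4, and t₀ < t* ≤ -1 < 0. Let M(t) be such that -μ'(t)/μ(t) ≤ M(t) pointwise on the region where μ is decreasing. Then the integral I_a(t) = ∫_{t₀}^{t} μ(τ)^{-a-1} (-τ)^{-2} dτ ≤ C a^{-1} μ(t)^{-a} for an absolute constant C independent of a. -/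
open intervalIntegral Real

/-- **Key lemma on powers of the inverse foliation density (Lemma 7.1(1)).**
If `μ` satisfies the two-sided bounds
`μ(s) + (η - 1/(2a))(1/t - 1/s) ≤ μ(t) ≤ μ(s) + (η + 1/(2a))(1/t - 1/s)`
for `t₀ ≤ t < s < t* ≤ -1`, with `η ≥ 1` and `a ≥ 4`, then
`∫_{t₀}^{t} μ(τ)^{-a-1} (-τ)⁻² dτ ≤ C a⁻¹ μ(t)^{-a}` for an absolute constant `C`. -/
theorem mu_power_integral_bound :
    ∃ C : ℝ, 0 < C ∧
      ∀ (a η t₀ tstar : ℝ) (μ : ℝ → ℝ),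
        4 ≤ a → 1 ≤ η → t₀ < tstar → tstar ≤ -1 →
        (∀ t, 0 < μ t) →
        (∀ t s, t₀ ≤ t → t < s → s < tstar →
          μ s + (η - 1/(2*a)) * (1/t - 1/s) ≤ μ t ∧
          μ t ≤ μ s + (η + 1/(2*a)) * (1/t - 1/s)) →
        ∀ t ∈ Set.Ico t₀ tstar,
          (∫ τ in t₀..t, (μ τ) ^ (-(a + 1)) * ((-τ) ^ 2)⁻¹) ≤
            C * a⁻¹ * (μ t) ^ (-a) := by
  refine ⟨2, by norm_num, ?_⟩
  intro a η t₀ tstar μ ha hη ht0star hstar hμpos hbound t ht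
  obtain ⟨ht0, htst⟩ := ht
  have ha0 : (0:ℝ) < a := by linarith
  have htneg : t < 0 := by linarith
  have hrhs_pos : 0 < 2 * a⁻¹ * (μ t) ^ (-a) := by
    have := hμpos t
    positivity
  rcases eq_or_lt_of_le ht0 with rfl | ht0t
  · simp [hrhs_pos.le]
  set c : ℝ := η - 1/(2*a) with hc_def
  set m : ℝ := μ t with hm_def
  set f : ℝ → ℝ := fun τ => m + c * (τ⁻¹ - t⁻¹) with hf_def
  set g : ℝ → ℝ := fun τ => (f τ) ^ (-(a + 1)) * ((-τ) ^ 2)⁻¹ with hg_def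
  set F : ℝ → ℝ := fun τ => (c * a)⁻¹ * (f τ) ^ (-a) with hF_def
  clear_value c m f g F
  have hc : (7:ℝ)/8 ≤ c := by
    have h8 : (8:ℝ) ≤ 2*a := by linarith
    have h1 : 1/(2*a) ≤ 1/8 := one_div_le_one_div_of_le (by norm_num) h8
    rw [hc_def]; linarith
  have hc0 : (0:ℝ) < c := lt_of_lt_of_le (by norm_num) hc
  have hm0 : 0 < m := by rw [hm_def]; exact hμpos t
  have ht0neg : t₀ < 0 := by linarith
  have hinv : ∀ τ, t₀ ≤ τ → τ ≤ t → t⁻¹ ≤ τ⁻¹ := by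
    intro τ hτ0 hτt
    have hτneg : τ < 0 := by linarith
    have h1 : τ * τ⁻¹ = 1 := mul_inv_cancel₀ hτneg.ne
    have h2 : t * t⁻¹ = 1 := mul_inv_cancel₀ htneg.ne
    nlinarith [mul_pos (neg_pos.mpr hτneg) (neg_pos.mpr htneg)]
  have hfval : ∀ τ, f τ = m + c * (τ⁻¹ - t⁻¹) := fun τ => by rw [hf_def]
  have hfpos : ∀ τ, t₀ ≤ τ → τ ≤ t → 0 < f τ ∧ m ≤ f τ := by
    intro τ hτ0 hτt
    have h1 := hinv τ hτ0 hτt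
    have h2 : 0 ≤ c * (τ⁻¹ - t⁻¹) := mul_nonneg hc0.le (by linarith)
    rw [hfval τ]
    constructor <;> linarith
  -- pointwise bound on [t₀, t]
  have hptwise : ∀ τ ∈ Set.Icc t₀ t, (μ τ) ^ (-(a + 1)) * ((-τ) ^ 2)⁻¹ ≤ g τ := by
    intro τ hτ
    obtain ⟨hτ0, hτt⟩ := hτ
    have hfμ : f τ ≤ μ τ := by
      rcases eq_or_lt_of_le hτt with rfl | hτt'
      · rw [hfval τ, hm_def]; simp
      · have hb := (hbound τ t hτ0 hτt' htst).1
        rw [hfval τ, ← hm_def] at *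
        have e1 : 1/τ = τ⁻¹ := one_div τ
        have e2 : 1/t = t⁻¹ := one_div t
        rw [e1, e2] at hb
        linarith
    have hfτ := (hfpos τ hτ0 hτt).1
    have hbase : (μ τ) ^ (-(a + 1)) ≤ (f τ) ^ (-(a + 1)) :=
      Real.rpow_le_rpow_of_nonpos hfτ hfμ (by linarith)
    have hsq : (0:ℝ) ≤ ((-τ) ^ 2)⁻¹ := by positivity
    rw [hg_def]
    exact mul_le_mul_of_nonneg_right hbase hsq
  -- derivative computation
  have hca : (c * a) ≠ 0 := by positivity
  have hderiv : ∀ τ ∈ Set.uIcc t₀ t, HasDerivAt F (g τ) τ := by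
    intro τ hτ
    rw [Set.uIcc_of_le ht0] at hτ
    obtain ⟨hτ0, hτt⟩ := hτ
    have hτneg : τ < 0 := by linarith
    have hτne : τ ≠ 0 := hτneg.ne
    have hfτ' : 0 < m + c * (τ⁻¹ - t⁻¹) := by
      have := (hfpos τ hτ0 hτt).1; rwa [hfval τ] at this
    have h1 : HasDerivAt (fun x : ℝ => m + c * (x⁻¹ - t⁻¹)) (c * -(τ^2)⁻¹) τ := by
      simpa using (((hasDerivAt_inv hτne).sub_const t⁻¹).const_mul c).const_add m
    have h2 := h1.rpow_const (p := -a) (Or.inl hfτ'.ne')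
    have h3 := h2.const_mul ((c*a)⁻¹)
    rw [hF_def, hg_def, hf_def]
    simp only []
    refine h3.congr_deriv ?_
    rw [neg_sq, show -(a+1) = -a - 1 by ring]
    field_simp [hc0.ne', ha0.ne']
  -- continuity / integrability of g
  have hgcont : ContinuousOn g (Set.uIcc t₀ t) := by
    rw [Set.uIcc_of_le ht0, hg_def]
    intro τ hτ
    obtain ⟨hτ0, hτt⟩ := hτ
    have hτneg : τ < 0 := by linarith
    have hfc : ContinuousOn f (Set.Icc t₀ t) := by
      rw [hf_def]
      apply ContinuousOn.add continuousOn_const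
      apply ContinuousOn.mul continuousOn_const
      apply ContinuousOn.sub _ continuousOn_const
      exact ContinuousOn.inv₀ continuousOn_id (fun x hx =>
        (lt_of_le_of_lt hx.2 htneg).ne)
    apply ContinuousWithinAt.mul
    · exact (hfc τ ⟨hτ0, hτt⟩).rpow_const (Or.inl (hfpos τ hτ0 hτt).1.ne')
    · apply ContinuousWithinAt.inv₀
      · exact ((continuous_neg.pow 2)).continuousWithinAt
      · exact pow_ne_zero 2 (neg_ne_zero.mpr hτneg.ne)
  have hgint : IntervalIntegrable g MeasureTheory.volume t₀ t :=
    hgcont.intervalIntegrable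
  have hintg : (∫ τ in t₀..t, g τ) = F t - F t₀ :=
    intervalIntegral.integral_eq_sub_of_hasDerivAt hderiv hgint
  have hFt : F t = (c * a)⁻¹ * m ^ (-a) := by
    rw [hF_def]
    simp only [hfval t, sub_self, mul_zero, add_zero]
  have hF0 : 0 ≤ F t₀ := by
    have hf0 := (hfpos t₀ le_rfl ht0t.le).1
    rw [hF_def]
    exact mul_nonneg (by positivity) (Real.rpow_nonneg hf0.le _)
  have hgbound : (∫ τ in t₀..t, g τ) ≤ (c * a)⁻¹ * m ^ (-a) := by
    rw [hintg, hFt]; linarith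
  have hfinal : (c * a)⁻¹ * m ^ (-a) ≤ 2 * a⁻¹ * m ^ (-a) := by
    have h1 : (c * a)⁻¹ ≤ 2 * a⁻¹ := by
      rw [mul_inv]
      have h2 : c⁻¹ ≤ 2 := by
        rw [inv_le_comm₀ hc0 (by norm_num)]
        linarith
      exact mul_le_mul_of_nonneg_right h2 (by positivity)
    exact mul_le_mul_of_nonneg_right h1 (Real.rpow_nonneg hm0.le _)
  by_cases hμint : IntervalIntegrable
      (fun τ => (μ τ) ^ (-(a + 1)) * ((-τ) ^ 2)⁻¹) MeasureTheory.volume t₀ t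
  · have hmono : (∫ τ in t₀..t, (μ τ) ^ (-(a + 1)) * ((-τ) ^ 2)⁻¹) ≤ ∫ τ in t₀..t, g τ :=
      intervalIntegral.integral_mono_on ht0 hμint hgint hptwise
    linarith
  · rw [intervalIntegral.integral_undef hμint]
    exact hrhs_pos.le
end

section
/- Suppose nonnegative continuous functions E, Ē, F̄, K on [-r₀, t] × [0, δ] satisfy: Ē(t,u) + F̄(t,u) + K(t,u) ≤ D̄ + A + C δ² ∫_{-r₀}^{t} (-t')^{-2} E(t',u) dt', and E(t,u) + F(t,u) ≤ D + δ^{-1} D̄ + δ^{-1} A + B, where A = sup_{t'≤t} |∫ ρ (K₁ψ - tψ)| and B = |∫ ρ K₀ψ| are given nonnegative quantities and D, D̄ ≥ 0 are data constants. Then E(t,u) ≤ C'(D + δ^{-1}D̄ + δ^{-1}A + B) and Ē(t,u) + F̄(t,u) + K(t,u) ≤ C'(D̄ + δ²D + A + δ²B) for an absolute constant C'. -/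
/-- **Coupling of the two energy inequalities for the multipliers `K₀` and `K₁`.**
If on `[-r₀, tmax] × [0, δ]` (with `tmax ≤ -1`, `0 < δ ≤ 1`) the energies satisfy
`Ē + F̄ + K ≤ D̄ + A + C δ² ∫_{-r₀}^t (-t')⁻² E dt'` and
`E + F ≤ D + δ⁻¹ D̄ + δ⁻¹ A + B`, then
`E ≤ C'(D + δ⁻¹ D̄ + δ⁻¹ A + B)` and `Ē + F̄ + K ≤ C'(D̄ + δ² D + A + δ² B)`
for a constant `C'` depending only on `C` (in particular independent of `r₀`). -/
theorem coupled_energy_estimates (C : ℝ) (hC : 0 ≤ C) :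
    ∃ C' : ℝ, 0 < C' ∧
      ∀ (r₀ δ tmax : ℝ) (E Ebar F Fbar K : ℝ → ℝ → ℝ) (A B D Dbar : ℝ),
        0 < δ → δ ≤ 1 → 0 < r₀ → -r₀ ≤ tmax → tmax ≤ -1 →
        0 ≤ A → 0 ≤ B → 0 ≤ D → 0 ≤ Dbar →
        (∀ u ∈ Set.Icc (0 : ℝ) δ, ∀ t ∈ Set.Icc (-r₀) tmax,
          0 ≤ E t u ∧ 0 ≤ Ebar t u ∧ 0 ≤ F t u ∧ 0 ≤ Fbar t u ∧ 0 ≤ K t u) →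
        (∀ u ∈ Set.Icc (0 : ℝ) δ,
          ContinuousOn (fun t => E t u) (Set.Icc (-r₀) tmax)) →
        (∀ u ∈ Set.Icc (0 : ℝ) δ, ∀ t ∈ Set.Icc (-r₀) tmax,
          Ebar t u + Fbar t u + K t u ≤
            Dbar + A + C * δ ^ 2 * ∫ t' in (-r₀)..t, ((-t') ^ 2)⁻¹ * E t' u) →
        (∀ u ∈ Set.Icc (0 : ℝ) δ, ∀ t ∈ Set.Icc (-r₀) tmax,
          E t u + F t u ≤ D + δ⁻¹ * Dbar + δ⁻¹ * A + B) →
        ∀ u ∈ Set.Icc (0 : ℝ) δ, ∀ t ∈ Set.Icc (-r₀) tmax,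
          E t u ≤ C' * (D + δ⁻¹ * Dbar + δ⁻¹ * A + B) ∧
          Ebar t u + Fbar t u + K t u ≤
            C' * (Dbar + δ ^ 2 * D + A + δ ^ 2 * B) := by
  refine ⟨C + 1, by linarith, ?_⟩
  intro r₀ δ tmax E Ebar F Fbar K A B D Dbar hδ hδ1 hr₀ hrt ht1 hA hB hD hDbar
    hnn hcont h1 h2 u hu t ht
  have hδinv : 0 ≤ δ⁻¹ := by positivity
  set M : ℝ := D + δ⁻¹ * Dbar + δ⁻¹ * A + B with hMdef
  have hM : 0 ≤ M := by rw [hMdef]; positivity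
  clear_value M
  -- uniform bound on E from the second inequality
  have hE : ∀ t' ∈ Set.Icc (-r₀) tmax, E t' u ≤ M := by
    intro t' ht'
    have h := h2 u hu t' ht'
    have hF := (hnn u hu t' ht').2.2.1
    linarith
  have htub : t ≤ -1 := le_trans ht.2 ht1
  have hrt' : -r₀ ≤ t := ht.1
  constructor
  · have := hE t ht
    nlinarith [mul_nonneg hC hM]
  · -- bound the integral
    have hsub : Set.Icc (-r₀) t ⊆ Set.Icc (-r₀) tmax :=
      Set.Icc_subset_Icc le_rfl ht.2
    have hne : ∀ x ∈ Set.Icc (-r₀) t, x ≠ 0 := by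
      intro x hx
      have : x ≤ -1 := le_trans hx.2 htub
      linarith
    have hcg : ContinuousOn (fun x : ℝ => ((-x) ^ 2)⁻¹) (Set.Icc (-r₀) t) := by
      apply ContinuousOn.inv₀
      · fun_prop
      · intro x hx
        simpa using pow_ne_zero 2 (neg_ne_zero.mpr (hne x hx))
    have hint1 : IntervalIntegrable (fun t' => ((-t') ^ 2)⁻¹ * E t' u)
        MeasureTheory.volume (-r₀) t := by
      apply ContinuousOn.intervalIntegrable
      rw [Set.uIcc_of_le hrt']
      exact hcg.mul ((hcont u hu).mono hsub)
    have hint2 : IntervalIntegrable (fun t' => ((-t') ^ 2)⁻¹ * M)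
        MeasureTheory.volume (-r₀) t := by
      apply ContinuousOn.intervalIntegrable
      rw [Set.uIcc_of_le hrt']
      exact hcg.mul continuousOn_const
    have hmono : (∫ t' in (-r₀)..t, ((-t') ^ 2)⁻¹ * E t' u) ≤
        ∫ t' in (-r₀)..t, ((-t') ^ 2)⁻¹ * M := by
      apply intervalIntegral.integral_mono_on hrt' hint1 hint2
      intro x hx
      have hxne : -x ≠ 0 := neg_ne_zero.mpr (hne x hx)
      have h0 : (0:ℝ) < ((-x) ^ 2)⁻¹ := by positivity
      exact mul_le_mul_of_nonneg_left (hE x (hsub hx)) h0.le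
    have hcalc : (∫ t' in (-r₀)..t, ((-t') ^ 2)⁻¹ * M) = (-t⁻¹ - r₀⁻¹) * M := by
      rw [intervalIntegral.integral_mul_const]
      have heq : (∫ t' in (-r₀)..t, ((-t') ^ 2)⁻¹) =
          ∫ t' in (-r₀)..t, t' ^ (-2 : ℤ) := by
        apply intervalIntegral.integral_congr
        intro x _
        simp only [neg_sq, zpow_neg]
        norm_num
      rw [heq, integral_zpow]
      · congr 1
        have ht0 : t ≠ 0 := by intro h; rw [h] at htub; norm_num at htub
        have hr0 : r₀ ≠ 0 := ne_of_gt hr₀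
        norm_num [zpow_neg, inv_neg]
        ring
      · right
        constructor
        · norm_num
        · rw [Set.uIcc_of_le hrt']
          intro h0
          exact hne 0 h0 rfl
    have hintle : (∫ t' in (-r₀)..t, ((-t') ^ 2)⁻¹ * E t' u) ≤ M := by
      refine hmono.trans ?_
      rw [hcalc]
      have h1' : -t⁻¹ - r₀⁻¹ ≤ 1 := by
        have ht0 : t < 0 := by linarith
        have h1 : (1:ℝ) ≤ -t := by linarith
        have hinv : (-t)⁻¹ ≤ 1 := inv_le_one_of_one_le₀ h1
        rw [inv_neg] at hinv
        have hr : 0 ≤ r₀⁻¹ := by positivity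
        linarith
      simpa using mul_le_mul_of_nonneg_right h1' hM
    have h := h1 u hu t ht
    have hδ2 : δ ^ 2 * δ⁻¹ = δ := by field_simp
    have key : C * δ ^ 2 * (∫ t' in (-r₀)..t, ((-t') ^ 2)⁻¹ * E t' u) ≤
        C * δ ^ 2 * M := by
      apply mul_le_mul_of_nonneg_left hintle
      positivity
    have expand : C * δ ^ 2 * M ≤ C * (δ ^ 2 * D + Dbar + A + δ ^ 2 * B) := by
      have : δ ^ 2 * M = δ ^ 2 * D + δ * Dbar + δ * A + δ ^ 2 * B := by
        rw [hMdef]; field_simp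
      rw [mul_assoc, this]
      apply mul_le_mul_of_nonneg_left _ hC
      nlinarith
    have hX : Dbar + A + C * (δ ^ 2 * D + Dbar + A + δ ^ 2 * B) ≤
        (C + 1) * (Dbar + δ ^ 2 * D + A + δ ^ 2 * B) := by
      nlinarith [mul_nonneg (sq_nonneg δ) hD, mul_nonneg (sq_nonneg δ) hB]
    linarith [h, key, expand, hX]
end
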